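/- Suppose the data satisfies the Koopman invariance relation φ_{n+1} = e^{(α* + iβ*)Δ_n} φ_n for all n ∈ {1, …, N}, where α*, β* ∈ ℝ. Then for all α, β ∈ ℝ, the derivative of the loss in the frequency direction is ∂L/∂β (α, β, a) = (2/N) Σ_{n=1}^N Δ_n e^{(α + α*)Δ_n} |φ_n|² sin( (β − β*) Δ_n ). -/

import Mathlib

open Complex Finset Matrix

/-- `φ n = a† G(x n)`, the dictionary observable evaluated along the data. -/
noncomputable def koopPhi {N M D : ℕ} (x : Fin (N + 1) → (Fin D → ℝ))
    (G : (Fin D → ℝ) → Fin M → ℂ) (a : Fin M → ℂ) (n : Fin (N + 1)) : ℂ :=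
  star a ⬝ᵥ G (x n)

/-- The loss `L(α, β, a) = (1/N) Σ_{n=1}^N |φ_{n+1} − e^{(α+iβ)Δ_n} φ_n|²`. -/
noncomputable def koopLoss {N M D : ℕ} (x : Fin (N + 1) → (Fin D → ℝ))
    (Δ : Fin N → ℝ) (G : (Fin D → ℝ) → Fin M → ℂ) (a : Fin M → ℂ)
    (α β : ℝ) : ℝ :=
  (1 / N : ℝ) * ∑ n : Fin N,
    ‖koopPhi x G a n.succ -
      Complex.exp ((α + β * Complex.I) * (Δ n : ℂ)) * koopPhi x G a n.castSucc‖ ^ 2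


lemma koop_aux (d α αstar βstar : ℝ) (φ : ℂ) (β : ℝ) :
    HasDerivAt (fun s : ℝ =>
      ‖Complex.exp ((↑αstar + ↑βstar * Complex.I) * (d:ℂ)) * φ -
        Complex.exp ((↑α + ↑s * Complex.I) * (d:ℂ)) * φ‖ ^ 2)
    (2 * (d * Real.exp ((α+αstar)*d) * ‖φ‖ ^ 2 * Real.sin ((β-βstar)*d))) β := by
  have hfun : ∀ s : ℝ,
      ‖Complex.exp ((↑αstar + ↑βstar * Complex.I) * (d:ℂ)) * φ -
        Complex.exp ((↑α + ↑s * Complex.I) * (d:ℂ)) * φ‖ ^ 2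
      = Complex.normSq φ * (Real.exp (αstar*d)^2 + Real.exp (α*d)^2)
        - 2 * Complex.normSq φ * Real.exp ((α+αstar)*d) * Real.cos ((s-βstar)*d) := by
    intro s
    rw [Complex.sq_norm, ← sub_mul, Complex.normSq_mul, Complex.normSq_sub]
    have h1 : Complex.normSq (Complex.exp ((↑αstar + ↑βstar * Complex.I) * (d:ℂ)))
        = Real.exp (αstar*d)^2 := by
      rw [Complex.normSq_eq_norm_sq, Complex.norm_exp]
      congr 1; congr 1; simp
    have h2 : Complex.normSq (Complex.exp ((↑α + ↑s * Complex.I) * (d:ℂ)))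
        = Real.exp (α*d)^2 := by
      rw [Complex.normSq_eq_norm_sq, Complex.norm_exp]
      congr 1; congr 1; simp
    have h3 : (Complex.exp ((↑αstar + ↑βstar * Complex.I) * (d:ℂ)) *
        (starRingEnd ℂ) (Complex.exp ((↑α + ↑s * Complex.I) * (d:ℂ)))).re
        = Real.exp ((α+αstar)*d) * Real.cos ((βstar - s)*d) := by
      rw [← Complex.exp_conj, ← Complex.exp_add, Complex.exp_re]
      congr 1
      · congr 1; simp; ring
      · simp; ring
    rw [h1, h2, h3]
    have : Real.cos ((βstar - s)*d) = Real.cos ((s - βstar)*d) := by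
      rw [show (βstar - s)*d = -((s-βstar)*d) by ring, Real.cos_neg]
    rw [this]; ring
  have hg : HasDerivAt (fun s : ℝ =>
      Complex.normSq φ * (Real.exp (αstar*d)^2 + Real.exp (α*d)^2)
        - 2 * Complex.normSq φ * Real.exp ((α+αstar)*d) * Real.cos ((s-βstar)*d))
      (2 * (d * Real.exp ((α+αstar)*d) * ‖φ‖ ^ 2 * Real.sin ((β-βstar)*d))) β := by
    have hc : HasDerivAt (fun s : ℝ => Real.cos ((s-βstar)*d))
        (-Real.sin ((β-βstar)*d) * d) β := by
      have hi : HasDerivAt (fun s : ℝ => (s - βstar) * d) d β := by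
        simpa using ((hasDerivAt_id β).sub_const βstar).mul_const d
      exact (Real.hasDerivAt_cos ((β-βstar)*d)).comp β hi
    have := ((hc.const_mul (2 * Complex.normSq φ * Real.exp ((α+αstar)*d))).const_sub
      (Complex.normSq φ * (Real.exp (αstar*d)^2 + Real.exp (α*d)^2)))
    convert this using 1
    · rfl
    · rfl
    rw [Complex.sq_norm]; ring
  exact hg.congr_of_eventuallyEq (Filter.Eventually.of_forall hfun)

/-- Under the Koopman invariance relation `φ_{n+1} = e^{(α* + iβ*)Δ_n} φ_n`, the
derivative of the loss in the frequency direction is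
`(2/N) Σ Δ_n e^{(α+α*)Δ_n} |φ_n|² sin((β − β*)Δ_n)`. -/
theorem loss_deriv_beta_invariant {N M D : ℕ}
    (x : Fin (N + 1) → (Fin D → ℝ)) (t : Fin (N + 1) → ℝ)
    (Δ : Fin N → ℝ) (hΔ : ∀ n : Fin N, Δ n = t n.succ - t n.castSucc)
    (hΔpos : ∀ n : Fin N, 0 < Δ n)
    (G : (Fin D → ℝ) → Fin M → ℂ) (a : Fin M → ℂ)
    (αstar βstar : ℝ)
    (hinv : ∀ n : Fin N, koopPhi x G a n.succ =
      Complex.exp ((αstar + βstar * Complex.I) * (Δ n : ℂ)) * koopPhi x G a n.castSucc) :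
    ∀ α β : ℝ,
      HasDerivAt (fun s : ℝ => koopLoss x Δ G a α s)
        ((2 / N : ℝ) * ∑ n : Fin N,
          Δ n * Real.exp ((α + αstar) * Δ n) * ‖koopPhi x G a n.castSucc‖ ^ 2 *
            Real.sin ((β - βstar) * Δ n)) β := by
  intro α β
  have hfun : (fun s : ℝ => koopLoss x Δ G a α s)
      = fun s : ℝ => (1 / N : ℝ) * ∑ n : Fin N,
        ‖Complex.exp ((↑αstar + ↑βstar * Complex.I) * (Δ n : ℂ)) * koopPhi x G a n.castSucc -
          Complex.exp ((↑α + ↑s * Complex.I) * (Δ n : ℂ)) * koopPhi x G a n.castSucc‖ ^ 2 := by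
    funext s
    unfold koopLoss
    congr 1
    exact Finset.sum_congr rfl fun n _ => by rw [hinv n]
  rw [hfun]
  have hsum : HasDerivAt (fun s : ℝ => ∑ n : Fin N,
      ‖Complex.exp ((↑αstar + ↑βstar * Complex.I) * (Δ n : ℂ)) * koopPhi x G a n.castSucc -
        Complex.exp ((↑α + ↑s * Complex.I) * (Δ n : ℂ)) * koopPhi x G a n.castSucc‖ ^ 2)
      (∑ n : Fin N, 2 * (Δ n * Real.exp ((α+αstar)*Δ n) * ‖koopPhi x G a n.castSucc‖ ^ 2 *
        Real.sin ((β-βstar)*Δ n))) β :=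
    HasDerivAt.fun_sum fun n _ => koop_aux (Δ n) α αstar βstar (koopPhi x G a n.castSucc) β
  have := hsum.const_mul (1 / N : ℝ)
  convert this using 1
  · rfl
  · rfl
  rw [← Finset.mul_sum]
  ring
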